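/- Let s : L → L' be a strict contraction and S = [[I_{L'}, s],[s*, I_L]]. Then ⟨S⁻¹(ℓ' ⊕ ℓ), ℓ' ⊕ ℓ⟩ ≥ ‖ℓ‖² and ⟨S⁻¹(ℓ' ⊕ ℓ), ℓ' ⊕ ℓ⟩ ≥ ‖ℓ'‖² for all ℓ ∈ L, ℓ' ∈ L'. -/

import Mathlib

open scoped InnerProductSpace ComplexOrder

set_option maxHeartbeats 1000000


private lemma rc_ofReal (x : ℝ) : (RCLike.ofReal x : ℂ) = Complex.ofReal x := rfl

private lemma inner_expand {L L' : Type*} [NormedAddCommGroup L] [InnerProductSpace ℂ L]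
    [CompleteSpace L] [NormedAddCommGroup L'] [InnerProductSpace ℂ L'] [CompleteSpace L']
    (s : L →L[ℂ] L') (a : L') (b : L) :
    ⟪a, a + s b⟫_ℂ + ⟪b, ContinuousLinearMap.adjoint s a + b⟫_ℂ
      = ((‖a‖ ^ 2 + ‖b‖ ^ 2 + 2 * (⟪a, s b⟫_ℂ).re : ℝ) : ℂ) := by
  rw [inner_add_right, inner_add_right, inner_self_eq_norm_sq_to_K, inner_self_eq_norm_sq_to_K,
    ContinuousLinearMap.adjoint_inner_right, ← inner_conj_symm (s b) a]
  simp only [rc_ofReal]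
  have h := Complex.add_conj ⟪a, s b⟫_ℂ
  push_cast at h ⊢
  linear_combination h


/-- The block operator `S = [[I, s],[s*, I]]` on the Hilbert-space direct sum `L' ⊕ L`,
acting by `S(ℓ' ⊕ ℓ) = (ℓ' + sℓ) ⊕ (s*ℓ' + ℓ)`. -/
noncomputable def blockOp (L L' : Type*) [NormedAddCommGroup L] [InnerProductSpace ℂ L]
    [CompleteSpace L] [NormedAddCommGroup L'] [InnerProductSpace ℂ L'] [CompleteSpace L']
    (s : L →L[ℂ] L') : WithLp 2 (L' × L) →L[ℂ] WithLp 2 (L' × L) :=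
  letI e := WithLp.prodContinuousLinearEquiv 2 ℂ L' L
  (e.symm.toContinuousLinearMap) ∘L
    (((ContinuousLinearMap.fst ℂ L' L + s ∘L ContinuousLinearMap.snd ℂ L' L).prod
      ((ContinuousLinearMap.adjoint s) ∘L ContinuousLinearMap.fst ℂ L' L
        + ContinuousLinearMap.snd ℂ L' L)) ∘L e.toContinuousLinearMap)

/-- For a strict contraction `s : L → L'`, with `S = [[I, s],[s*, I]]`, one has
`⟨S⁻¹(ℓ' ⊕ ℓ), ℓ' ⊕ ℓ⟩ ≥ ‖ℓ‖²` and `⟨S⁻¹(ℓ' ⊕ ℓ), ℓ' ⊕ ℓ⟩ ≥ ‖ℓ'‖²`. -/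
theorem blockOp_inv_inner_ge
    (L L' : Type*) [NormedAddCommGroup L] [InnerProductSpace ℂ L] [CompleteSpace L]
    [NormedAddCommGroup L'] [InnerProductSpace ℂ L'] [CompleteSpace L']
    (s : L →L[ℂ] L') (hs : ‖s‖ < 1) :
    ∀ (ℓ' : L') (ℓ : L),
      (‖ℓ‖ : ℂ) ^ 2 ≤ ⟪Ring.inverse (blockOp L L' s) ((WithLp.equiv 2 (L' × L)).symm (ℓ', ℓ)),
          (WithLp.equiv 2 (L' × L)).symm (ℓ', ℓ)⟫_ℂ ∧
      (‖ℓ'‖ : ℂ) ^ 2 ≤ ⟪Ring.inverse (blockOp L L' s) ((WithLp.equiv 2 (L' × L)).symm (ℓ', ℓ)),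
          (WithLp.equiv 2 (L' × L)).symm (ℓ', ℓ)⟫_ℂ := by
  intro ℓ' ℓ
  set S := blockOp L L' s with hSdef
  have hadj : ‖ContinuousLinearMap.adjoint s‖ = ‖s‖ :=
    LinearIsometryEquiv.norm_map _ s
  have happ : ∀ y : WithLp 2 (L' × L),
      S y = (WithLp.equiv 2 (L' × L)).symm
        (y.fst + s y.snd, ContinuousLinearMap.adjoint s y.fst + y.snd) := fun _ => rfl
  -- norm bound on S - 1
  have hb : ∀ y : WithLp 2 (L' × L), ‖(S - 1) y‖ ≤ ‖s‖ * ‖y‖ := by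
    intro y
    have h1 : (S - 1) y = (WithLp.equiv 2 (L' × L)).symm
        (s y.snd, ContinuousLinearMap.adjoint s y.fst) := by
      apply (WithLp.equiv 2 (L' × L)).injective
      ext
      · simp [ContinuousLinearMap.sub_apply, happ y]
      · simp [ContinuousLinearMap.sub_apply, happ y]
    have h2 : ‖(S - 1) y‖ ^ 2 ≤ (‖s‖ * ‖y‖) ^ 2 := by
      rw [h1, WithLp.prod_norm_sq_eq_of_L2]
      have e1 : ‖s y.snd‖ ≤ ‖s‖ * ‖y.snd‖ := s.le_opNorm _
      have e2 : ‖ContinuousLinearMap.adjoint s y.fst‖ ≤ ‖s‖ * ‖y.fst‖ := by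
        simpa [hadj] using (ContinuousLinearMap.adjoint s).le_opNorm y.fst
      have e3 : ‖y‖ ^ 2 = ‖y.fst‖ ^ 2 + ‖y.snd‖ ^ 2 := WithLp.prod_norm_sq_eq_of_L2 y
      have e4 : ‖s y.snd‖ ^ 2 ≤ (‖s‖ * ‖y.snd‖) ^ 2 :=
        pow_le_pow_left₀ (norm_nonneg _) e1 2
      have e5 : ‖ContinuousLinearMap.adjoint s y.fst‖ ^ 2 ≤ (‖s‖ * ‖y.fst‖) ^ 2 :=
        pow_le_pow_left₀ (norm_nonneg _) e2 2
      show ‖s y.snd‖ ^ 2 + ‖ContinuousLinearMap.adjoint s y.fst‖ ^ 2 ≤ _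
      calc ‖s y.snd‖ ^ 2 + ‖ContinuousLinearMap.adjoint s y.fst‖ ^ 2
          ≤ (‖s‖ * ‖y.snd‖) ^ 2 + (‖s‖ * ‖y.fst‖) ^ 2 := add_le_add e4 e5
        _ = (‖s‖ * ‖y‖) ^ 2 := by rw [mul_pow, mul_pow, mul_pow, e3]; ring
    exact (pow_le_pow_iff_left₀ (norm_nonneg _)
      (mul_nonneg (norm_nonneg s) (norm_nonneg y)) two_ne_zero).mp h2
  have hT : ‖S - 1‖ < 1 :=
    lt_of_le_of_lt (ContinuousLinearMap.opNorm_le_bound _ (norm_nonneg s) hb) hs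
  have hU : IsUnit S := by
    have h' : ‖1 - S‖ < 1 := by rwa [norm_sub_rev]
    have := (Units.oneSub (1 - S) h').isUnit
    simpa using this
  set x : WithLp 2 (L' × L) := (WithLp.equiv 2 (L' × L)).symm (ℓ', ℓ) with hxdef
  set y : WithLp 2 (L' × L) := Ring.inverse S x with hydef
  have hx : S y = x := by
    have h := Ring.mul_inverse_cancel S hU
    have h2 := DFunLike.congr_fun h x
    simpa [ContinuousLinearMap.mul_apply] using h2
  have hcomp : y.fst + s y.snd = ℓ' ∧ ContinuousLinearMap.adjoint s y.fst + y.snd = ℓ := by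
    have := (WithLp.equiv 2 (L' × L)).symm.injective ((happ y).symm.trans hx)
    exact ⟨congrArg Prod.fst this, congrArg Prod.snd this⟩
  have hinner : ⟪y, x⟫_ℂ
      = ((‖y.fst‖ ^ 2 + ‖y.snd‖ ^ 2 + 2 * (⟪y.fst, s y.snd⟫_ℂ).re : ℝ) : ℂ) := by
    rw [WithLp.prod_inner_apply]
    have hx1 : x.ofLp.1 = ℓ' := rfl
    have hx2 : x.ofLp.2 = ℓ := rfl
    rw [hx1, hx2, ← hcomp.1, ← hcomp.2]
    exact inner_expand s y.fst y.snd
  have hre : (⟪y.fst, s y.snd⟫_ℂ).re = RCLike.re ⟪y.fst, s y.snd⟫_ℂ := rfl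
  constructor
  · rw [hinner, ← hcomp.2]
    have hreal : ‖ContinuousLinearMap.adjoint s y.fst + y.snd‖ ^ 2
        ≤ ‖y.fst‖ ^ 2 + ‖y.snd‖ ^ 2 + 2 * (⟪y.fst, s y.snd⟫_ℂ).re := by
      rw [norm_add_sq (𝕜 := ℂ), ContinuousLinearMap.adjoint_inner_left]
      have : ‖ContinuousLinearMap.adjoint s y.fst‖ ^ 2 ≤ ‖y.fst‖ ^ 2 := by
        have h1 : ‖ContinuousLinearMap.adjoint s y.fst‖ ≤ ‖y.fst‖ := by
          have := (ContinuousLinearMap.adjoint s).le_opNorm y.fst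
          nlinarith [norm_nonneg y.fst]
        exact pow_le_pow_left₀ (norm_nonneg _) h1 2
      rw [hre]
      nlinarith
    calc (‖ContinuousLinearMap.adjoint s y.fst + y.snd‖ : ℂ) ^ 2
        = ((‖ContinuousLinearMap.adjoint s y.fst + y.snd‖ ^ 2 : ℝ) : ℂ) := by push_cast; ring
      _ ≤ _ := Complex.real_le_real.mpr hreal
  · rw [hinner, ← hcomp.1]
    have hreal : ‖y.fst + s y.snd‖ ^ 2
        ≤ ‖y.fst‖ ^ 2 + ‖y.snd‖ ^ 2 + 2 * (⟪y.fst, s y.snd⟫_ℂ).re := by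
      rw [norm_add_sq (𝕜 := ℂ)]
      have : ‖s y.snd‖ ^ 2 ≤ ‖y.snd‖ ^ 2 := by
        have h1 : ‖s y.snd‖ ≤ ‖y.snd‖ := by
          have := s.le_opNorm y.snd
          nlinarith [norm_nonneg y.snd]
        exact pow_le_pow_left₀ (norm_nonneg _) h1 2
      rw [hre]
      nlinarith
    calc (‖y.fst + s y.snd‖ : ℂ) ^ 2
        = ((‖y.fst + s y.snd‖ ^ 2 : ℝ) : ℂ) := by push_cast; ring
      _ ≤ _ := Complex.real_le_real.mpr hreal
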